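/- arXiv:math-ph/0210013 — 2 statements merged into one kernel-verified Lean document; each statement's English description precedes it below -/
import Mathlib

section
/- 𝔓_h(1/2) = 1/2; that is, (3Γ(2/3)/Γ(1/3)²) · 2^{−1/3} · ₂F₁(1/3,2/3;4/3;1/2) = 1/2. -/
open scoped BigOperators

/-- Rising factorial (Pochhammer symbol) `(x)_k = x(x+1)⋯(x+k-1)`. -/
noncomputable def pochR (x : ℝ) (k : ℕ) : ℝ := ∏ i ∈ Finset.range k, (x + i)

/-- The Gauss hypergeometric series `₂F₁(a,b;c;z)`. -/
noncomputable def F21R (a b c z : ℝ) : ℝ :=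
  ∑' k : ℕ, pochR a k * pochR b k / (pochR c k * (Nat.factorial k : ℝ)) * z ^ k

/-- The generalized hypergeometric series `₃F₂(a₁,a₂,a₃;b₁,b₂;z)`. -/
noncomputable def F32R (a₁ a₂ a₃ b₁ b₂ z : ℝ) : ℝ :=
  ∑' k : ℕ, pochR a₁ k * pochR a₂ k * pochR a₃ k /
      (pochR b₁ k * pochR b₂ k * (Nat.factorial k : ℝ)) * z ^ k

/-- Cardy's horizontal crossing function `𝔓_h`. -/
noncomputable def Ph (z : ℝ) : ℝ :=
  3 * Real.Gamma (2/3) / (Real.Gamma (1/3)) ^ 2 * z ^ ((1:ℝ)/3) *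
    F21R (1/3) (2/3) (4/3) z

/-- Watts's horizontal-vertical crossing function `𝔓_hv`. -/
noncomputable def Phv (z : ℝ) : ℝ :=
  Ph z - Real.sqrt 3 / (2 * Real.pi) * z * F32R 1 1 (4/3) 2 (5/3) z

/-- Cardy's cluster-number function `𝔑_h`. -/
noncomputable def Nh (z : ℝ) : ℝ :=
  1/2 - Real.sqrt 3 / (4 * Real.pi) *
    (Real.log (1 - z) + (1 - z) * F32R 1 1 (4/3) 2 (5/3) (1 - z))


lemma pochR_zero (x : ℝ) : pochR x 0 = 1 := Finset.prod_range_zero _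

lemma pochR_succ (x : ℝ) (k : ℕ) : pochR x (k+1) = pochR x k * (x + k) :=
  Finset.prod_range_succ _ _

lemma pochR_succ_left (x : ℝ) (k : ℕ) : pochR x (k+1) = x * pochR (x+1) k := by
  rw [pochR, Finset.prod_range_succ']
  simp only [Nat.cast_zero, add_zero]
  rw [mul_comm, pochR]
  congr 1
  apply Finset.prod_congr rfl
  intro i _
  push_cast
  ring

lemma pochR_pos {x : ℝ} (hx : 0 < x) (k : ℕ) : 0 < pochR x k := by
  apply Finset.prod_pos
  intro i _
  positivity

lemma pochR_le_factorial (k : ℕ) : pochR (2/3) k ≤ (Nat.factorial k : ℝ) := by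
  have : (Nat.factorial k : ℝ) = ∏ i ∈ Finset.range k, ((i : ℝ) + 1) := by
    rw [← Finset.prod_range_add_one_eq_factorial]
    push_cast
    rfl
  rw [this, pochR]
  apply Finset.prod_le_prod
  · intro i _; positivity
  · intro i _; linarith [Nat.cast_nonneg (α := ℝ) i]

noncomputable def cc (k : ℕ) : ℝ := pochR (2/3) k / (Nat.factorial k : ℝ)

lemma cc_nonneg (k : ℕ) : 0 ≤ cc k := by
  apply div_nonneg (le_of_lt (pochR_pos (by norm_num) k)) (Nat.cast_nonneg _)

lemma cc_le_one (k : ℕ) : cc k ≤ 1 := by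
  rw [cc, div_le_one (by exact_mod_cast Nat.factorial_pos k)]
  exact pochR_le_factorial k

lemma cc_zero : cc 0 = 1 := by simp [cc, pochR_zero]

lemma cc_rec (n : ℕ) : ((n:ℝ)+1) * cc (n+1) = ((n:ℝ)+2/3) * cc n := by
  have h1 : pochR (2/3) (n+1) = pochR (2/3) n * (2/3 + n) := pochR_succ _ _
  have h2 : ((Nat.factorial (n+1) : ℕ) : ℝ) = ((n:ℝ)+1) * (Nat.factorial n : ℝ) := by
    rw [Nat.factorial_succ]; push_cast; ring
  have hf : (Nat.factorial n : ℝ) ≠ 0 := by exact_mod_cast (Nat.factorial_pos n).ne'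
  rw [cc, cc, h1, h2]
  field_simp
  ring

lemma ratio13 (k : ℕ) : pochR (1/3) k * (1/3 + (k:ℝ)) = 1/3 * pochR (4/3) k := by
  have h1 := pochR_succ (1/3) k
  have h2 := pochR_succ_left (1/3) k
  rw [← h1, h2]
  norm_num

open Finset Set

noncomputable def gg (x : ℝ) : ℝ := ∑' k : ℕ, cc k * x ^ k

lemma summable_n1x {r : ℝ} (hr : 0 ≤ r) (hx : r < 1) :
    Summable (fun n : ℕ => ((n:ℝ)+1) * r ^ n) := by
  have h1 : Summable (fun n : ℕ => (n:ℝ) * r ^ n) := by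
    have := summable_pow_mul_geometric_of_norm_lt_one (R := ℝ) 1 (r := r)
      (by rwa [Real.norm_eq_abs, abs_of_nonneg hr])
    simpa using this
  have h2 : Summable (fun n : ℕ => r ^ n) := summable_geometric_of_lt_one hr hx
  have := h1.add h2
  apply this.congr
  intro n; ring

lemma summable_nx {r : ℝ} (hr : 0 ≤ r) (hx : r < 1) :
    Summable (fun n : ℕ => (n:ℝ) * r ^ (n-1)) := by
  apply (summable_nat_add_iff 1).mp
  apply (summable_n1x hr hx).congr
  intro n
  push_cast
  simp [Nat.add_sub_cancel]

lemma summable_gg {x : ℝ} (hx : |x| < 1) : Summable (fun k : ℕ => cc k * x ^ k) := by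
  apply Summable.of_norm_bounded (g := fun k : ℕ => |x| ^ k)
    (summable_geometric_of_lt_one (abs_nonneg x) hx)
  intro k
  rw [norm_mul, norm_pow, Real.norm_eq_abs, Real.norm_eq_abs,
    abs_of_nonneg (cc_nonneg k)]
  calc cc k * |x| ^ k ≤ 1 * |x| ^ k := by
        apply mul_le_mul_of_nonneg_right (cc_le_one k) (by positivity)
    _ = |x| ^ k := one_mul _

lemma summable_dd {x : ℝ} (hx : |x| < 1) :
    Summable (fun k : ℕ => cc k * ((k:ℝ) * x ^ (k-1))) := by
  apply Summable.of_norm_bounded (g := fun k : ℕ => (k:ℝ) * |x| ^ (k-1))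
    (summable_nx (abs_nonneg x) hx)
  intro k
  rw [norm_mul, Real.norm_eq_abs, abs_of_nonneg (cc_nonneg k), norm_mul, norm_pow]
  simp only [Real.norm_eq_abs, Nat.abs_cast]
  calc cc k * ((k:ℝ) * |x| ^ (k-1)) ≤ 1 * ((k:ℝ) * |x| ^ (k-1)) := by
        apply mul_le_mul_of_nonneg_right (cc_le_one k) (by positivity)
    _ = (k:ℝ) * |x| ^ (k-1) := one_mul _

lemma summable_ngg {x : ℝ} (hx : |x| < 1) :
    Summable (fun k : ℕ => ((k:ℝ)+2/3) * (cc k * x ^ k)) := by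
  apply Summable.of_norm_bounded (g := fun k : ℕ => ((k:ℝ)+1) * |x| ^ k)
    (summable_n1x (abs_nonneg x) hx)
  intro k
  rw [norm_mul]
  apply mul_le_mul
  · rw [Real.norm_eq_abs, abs_of_nonneg (by positivity)]; linarith [Nat.cast_nonneg (α := ℝ) k]
  · rw [norm_mul, norm_pow, Real.norm_eq_abs, Real.norm_eq_abs, abs_of_nonneg (cc_nonneg k)]
    calc cc k * |x| ^ k ≤ 1 * |x| ^ k :=
          mul_le_mul_of_nonneg_right (cc_le_one k) (by positivity)
      _ = |x| ^ k := one_mul _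
  · positivity
  · positivity

lemma summable_kgg {x : ℝ} (hx : |x| < 1) :
    Summable (fun k : ℕ => (k:ℝ) * (cc k * x ^ k)) := by
  apply Summable.of_norm_bounded (g := fun k : ℕ => ((k:ℝ)+1) * |x| ^ k)
    (summable_n1x (abs_nonneg x) hx)
  intro k
  rw [norm_mul]
  apply mul_le_mul
  · rw [Real.norm_eq_abs, Nat.abs_cast]; linarith
  · rw [norm_mul, norm_pow, Real.norm_eq_abs, Real.norm_eq_abs, abs_of_nonneg (cc_nonneg k)]
    calc cc k * |x| ^ k ≤ 1 * |x| ^ k :=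
          mul_le_mul_of_nonneg_right (cc_le_one k) (by positivity)
      _ = |x| ^ k := one_mul _
  · positivity
  · positivity

lemma hasDerivAt_gg {x : ℝ} (hx : x ∈ Set.Ioo (-(3/4):ℝ) (3/4)) :
    HasDerivAt gg (∑' k : ℕ, cc k * ((k:ℝ) * x ^ (k-1))) x := by
  refine hasDerivAt_tsum_of_isPreconnected (y₀ := 0)
    (u := fun k : ℕ => (k:ℝ) * ((3:ℝ)/4) ^ (k-1))
    (summable_nx (by norm_num) (by norm_num))
    isOpen_Ioo (convex_Ioo _ _).isPreconnected
    (fun n y _ => (hasDerivAt_pow n y).const_mul (cc n))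
    ?_ (by constructor <;> norm_num) (summable_gg (x := 0) (by norm_num)) hx
  intro n y hy
  have hya : |y| ≤ 3/4 := by
    rw [abs_le]; constructor <;> [linarith [hy.1]; linarith [hy.2]]
  rw [norm_mul, norm_mul, norm_pow]
  simp only [Real.norm_eq_abs, Nat.abs_cast, abs_of_nonneg (cc_nonneg n)]
  calc cc n * ((n:ℝ) * |y| ^ (n-1)) ≤ 1 * ((n:ℝ) * |y| ^ (n-1)) :=
        mul_le_mul_of_nonneg_right (cc_le_one n) (by positivity)
    _ = (n:ℝ) * |y| ^ (n-1) := one_mul _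
    _ ≤ (n:ℝ) * ((3:ℝ)/4) ^ (n-1) := by
        apply mul_le_mul_of_nonneg_left _ (Nat.cast_nonneg n)
        exact pow_le_pow_left₀ (abs_nonneg y) hya _

lemma deriv_identity {x : ℝ} (hx : |x| < 1) :
    (1 - x) * (∑' k : ℕ, cc k * ((k:ℝ) * x ^ (k-1))) = (2/3) * gg x := by
  have hD := summable_dd hx
  have h1 : (∑' k : ℕ, cc k * ((k:ℝ) * x ^ (k-1)))
      = ∑' k : ℕ, ((k:ℝ)+2/3) * (cc k * x ^ k) := by
    rw [Summable.tsum_eq_zero_add hD]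
    simp only [Nat.cast_zero, zero_mul, mul_zero, zero_add, Nat.add_sub_cancel]
    apply tsum_congr
    intro n
    have h := cc_rec n
    push_cast
    linear_combination (x ^ n) * h
  have h2 : x * (∑' k : ℕ, cc k * ((k:ℝ) * x ^ (k-1)))
      = ∑' k : ℕ, (k:ℝ) * (cc k * x ^ k) := by
    rw [← tsum_mul_left]
    apply tsum_congr
    intro n
    match n with
    | 0 => simp
    | (m+1) =>
      simp only [Nat.add_sub_cancel]
      push_cast
      rw [pow_succ]
      ring
  rw [sub_mul, one_mul, h2, h1, ← Summable.tsum_sub (summable_ngg hx) (summable_kgg hx), gg,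
    ← tsum_mul_left]
  apply tsum_congr
  intro n
  ring

lemma gg_zero : gg 0 = 1 := by
  rw [gg, tsum_eq_single 0 (fun k hk => by simp [zero_pow hk])]
  simp [cc_zero]

lemma gg_eq {x : ℝ} (hx : x ∈ Set.Icc (0:ℝ) (1/2)) : gg x = (1-x) ^ (-(2:ℝ)/3) := by
  set h : ℝ → ℝ := fun y => gg y * (1-y) ^ ((2:ℝ)/3) with hh
  have hder : ∀ y ∈ Set.Icc (0:ℝ) (1/2), HasDerivAt h 0 y := by
    intro y hy
    have hmem : y ∈ Set.Ioo (-(3/4):ℝ) (3/4) := by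
      constructor
      · linarith [hy.1]
      · linarith [hy.2]
    have h1y : (0:ℝ) < 1 - y := by linarith [hy.2]
    have hyabs : |y| < 1 := by
      rw [abs_lt]; constructor <;> [linarith [hy.1]; linarith [hy.2]]
    have hg := hasDerivAt_gg hmem
    have hr : HasDerivAt (fun z : ℝ => (1-z) ^ ((2:ℝ)/3))
        ((2/3) * (1-y) ^ ((2:ℝ)/3 - 1) * (-1)) y := by
      have h0 : HasDerivAt (fun z : ℝ => 1 - z) (-1) y := (hasDerivAt_id y).const_sub 1
      exact (Real.hasDerivAt_rpow_const (x := 1-y) (p := 2/3) (Or.inl h1y.ne')).comp y h0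
    have hprod := hg.mul hr
    refine hprod.congr_deriv ?_
    symm
    have hpow : (1-y) * (1-y) ^ ((2:ℝ)/3 - 1) = (1-y) ^ ((2:ℝ)/3) := by
      nth_rewrite 1 [← Real.rpow_one (1-y)]
      rw [← Real.rpow_add h1y]
      norm_num
    have hid := deriv_identity hyabs
    rw [← hpow]
    set D := ∑' k : ℕ, cc k * ((k:ℝ) * y ^ (k-1))
    linear_combination (-(1-y) ^ ((2:ℝ)/3 - 1)) * hid
  have key := constant_of_has_deriv_right_zero (f := h) (a := 0) (b := 1/2)
    (fun y hy => ((hder y hy).continuousAt).continuousWithinAt)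
    (fun y hy => ((hder y (Set.mem_Icc_of_Ico hy)).hasDerivWithinAt))
  have hx1 : h x = h 0 := key x hx
  have h0 : h 0 = 1 := by
    simp only [hh, sub_zero, Real.one_rpow, mul_one, gg_zero]
  rw [h0, hh] at hx1
  have h1x : (0:ℝ) < 1 - x := by linarith [hx.2]
  have hne : (1-x) ^ ((2:ℝ)/3) ≠ 0 := (Real.rpow_pos_of_pos h1x _).ne'
  have : gg x = ((1-x) ^ ((2:ℝ)/3))⁻¹ := by
    field_simp at hx1 ⊢
    linarith [hx1]
  rw [this, show (-(2:ℝ)/3) = -((2:ℝ)/3) by ring, Real.rpow_neg h1x.le]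

open MeasureTheory intervalIntegral

noncomputable def TT (k : ℕ) : ℝ := cc k * ((1/2:ℝ) ^ ((k:ℝ)+1/3) / ((k:ℝ)+1/3))

lemma TT_nonneg (k : ℕ) : 0 ≤ TT k := by
  have := cc_nonneg k
  have h1 : (0:ℝ) < (1/2:ℝ) ^ ((k:ℝ)+1/3) := Real.rpow_pos_of_pos (by norm_num) _
  have h2 : (0:ℝ) < (k:ℝ)+1/3 := by positivity
  exact mul_nonneg this (by positivity)

lemma int_Fk (k : ℕ) : ∫ t in (0:ℝ)..(1/2), t ^ ((k:ℝ) - 2/3)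
    = (1/2:ℝ) ^ ((k:ℝ)+1/3) / ((k:ℝ)+1/3) := by
  rw [integral_rpow (Or.inl (by have := Nat.cast_nonneg (α := ℝ) k; linarith))]
  have h0 : (0:ℝ) ^ ((k:ℝ) - 2/3 + 1) = 0 := by
    apply Real.zero_rpow
    have := Nat.cast_nonneg (α := ℝ) k
    intro hc
    linarith
  rw [h0, show (k:ℝ) - 2/3 + 1 = (k:ℝ) + 1/3 by ring, sub_zero]

lemma intervalIntegrable_Fk (k : ℕ) :
    IntervalIntegrable (fun t : ℝ => cc k * t ^ ((k:ℝ) - 2/3)) volume 0 (1/2) :=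
  (intervalIntegrable_rpow' (by have := Nat.cast_nonneg (α := ℝ) k; linarith)).const_mul _

lemma summable_TT : Summable TT := by
  refine Summable.of_nonneg_of_le TT_nonneg ?_
    ((summable_geometric_of_lt_one (r := (1/2:ℝ)) (by norm_num) (by norm_num)).mul_left 3)
  · intro k
    rw [TT]
    have h2 : (0:ℝ) < (k:ℝ)+1/3 := by positivity
    have hb1 : (1/2:ℝ) ^ ((k:ℝ)+1/3) ≤ (1/2:ℝ) ^ (k:ℝ) :=
      Real.rpow_le_rpow_of_exponent_ge (by norm_num) (by norm_num) (by linarith)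
    have hb2 : (1/2:ℝ) ^ ((k:ℝ)+1/3) / ((k:ℝ)+1/3) ≤ 3 * (1/2:ℝ) ^ k := by
      rw [div_le_iff₀ h2, Real.rpow_natCast] at *
      nlinarith [Real.rpow_pos_of_pos (show (0:ℝ) < 1/2 by norm_num) ((k:ℝ)+1/3),
        pow_pos (show (0:ℝ) < 1/2 by norm_num) k, Nat.cast_nonneg (α := ℝ) k]
    calc cc k * ((1/2:ℝ) ^ ((k:ℝ)+1/3) / ((k:ℝ)+1/3)) ≤ 1 * ((1/2:ℝ) ^ ((k:ℝ)+1/3) / ((k:ℝ)+1/3)) := by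
          apply mul_le_mul_of_nonneg_right (cc_le_one k)
          positivity
      _ = (1/2:ℝ) ^ ((k:ℝ)+1/3) / ((k:ℝ)+1/3) := one_mul _
      _ ≤ 3 * (1/2:ℝ) ^ k := hb2

lemma claimA : ∫ t in (0:ℝ)..(1/2), t ^ (-(2:ℝ)/3) * (1-t) ^ (-(2:ℝ)/3) = ∑' k, TT k := by
  rw [integral_of_le (by norm_num)]
  have hmeas : ∀ k : ℕ, AEStronglyMeasurable (fun t : ℝ => cc k * t ^ ((k:ℝ) - 2/3))
      (volume.restrict (Set.Ioc (0:ℝ) (1/2))) := by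
    intro k
    exact ((measurable_id'.pow_const ((k:ℝ) - 2/3)).const_mul _).aestronglyMeasurable
  have hint : ∀ k : ℕ, IntegrableOn (fun t : ℝ => cc k * t ^ ((k:ℝ) - 2/3))
      (Set.Ioc (0:ℝ) (1/2)) volume := by
    intro k
    exact (intervalIntegrable_iff_integrableOn_Ioc_of_le (by norm_num)).mp
      (intervalIntegrable_Fk k)
  have hIk : ∀ k : ℕ, ∫ t in Set.Ioc (0:ℝ) (1/2), cc k * t ^ ((k:ℝ) - 2/3) = TT k := by
    intro k
    rw [← integral_of_le (by norm_num), intervalIntegral.integral_const_mul, int_Fk, TT]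
  have hnorm : ∀ k : ℕ, ∫ t in Set.Ioc (0:ℝ) (1/2), ‖cc k * t ^ ((k:ℝ) - 2/3)‖ = TT k := by
    intro k
    rw [← hIk k]
    apply setIntegral_congr_fun measurableSet_Ioc
    intro t ht
    simp only
    rw [Real.norm_eq_abs, abs_of_nonneg]
    have := Real.rpow_nonneg (le_of_lt ht.1) ((k:ℝ) - 2/3)
    exact mul_nonneg (cc_nonneg k) this
  have hsum : Summable (fun k : ℕ => ∫ t in Set.Ioc (0:ℝ) (1/2), ‖cc k * t ^ ((k:ℝ) - 2/3)‖) := by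
    apply summable_TT.congr
    intro k
    rw [hnorm k]
  have hswap := integral_tsum_of_summable_integral_norm hint hsum
  have hpt : ∀ t ∈ Set.Ioc (0:ℝ) (1/2),
      t ^ (-(2:ℝ)/3) * (1-t) ^ (-(2:ℝ)/3) = ∑' k : ℕ, cc k * t ^ ((k:ℝ) - 2/3) := by
    intro t ht
    have ht0 : (0:ℝ) < t := ht.1
    have : ∀ k : ℕ, cc k * t ^ ((k:ℝ) - 2/3) = (cc k * t ^ k) * t ^ (-(2:ℝ)/3) := by
      intro k
      rw [show (k:ℝ) - 2/3 = (k:ℝ) + (-(2:ℝ)/3) by ring, Real.rpow_add ht0,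
        Real.rpow_natCast]
      ring
    rw [tsum_congr this, tsum_mul_right]
    have hgg : (∑' k : ℕ, cc k * t ^ k) = (1-t) ^ (-(2:ℝ)/3) :=
      gg_eq ⟨ht0.le, ht.2⟩
    rw [hgg]
    ring
  calc ∫ t in Set.Ioc (0:ℝ) (1/2), t ^ (-(2:ℝ)/3) * (1-t) ^ (-(2:ℝ)/3)
      = ∫ t in Set.Ioc (0:ℝ) (1/2), ∑' k : ℕ, cc k * t ^ ((k:ℝ) - 2/3) :=
        setIntegral_congr_fun measurableSet_Ioc hpt
    _ = ∑' k : ℕ, ∫ t in Set.Ioc (0:ℝ) (1/2), cc k * t ^ ((k:ℝ) - 2/3) := hswap.symm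
    _ = ∑' k, TT k := tsum_congr hIk

lemma ff_symm (x : ℝ) : (1-x) ^ (-(2:ℝ)/3) * (1-(1-x)) ^ (-(2:ℝ)/3)
    = x ^ (-(2:ℝ)/3) * (1-x) ^ (-(2:ℝ)/3) := by
  rw [show 1-(1-x) = x by ring]
  ring

lemma II1 : IntervalIntegrable (fun t : ℝ => t ^ (-(2:ℝ)/3) * (1-t) ^ (-(2:ℝ)/3))
    volume 0 (1/2) := by
  rw [intervalIntegrable_iff_integrableOn_Ioc_of_le (by norm_num)]
  have hg : IntegrableOn (fun t : ℝ => 2 * t ^ (-(2:ℝ)/3)) (Set.Ioc (0:ℝ) (1/2)) volume :=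
    (intervalIntegrable_iff_integrableOn_Ioc_of_le (by norm_num)).mp
      ((intervalIntegrable_rpow' (by norm_num)).const_mul 2)
  apply Integrable.mono hg
  · exact ((measurable_id'.pow_const (-(2:ℝ)/3)).mul
      ((measurable_const.sub measurable_id').pow_const (-(2:ℝ)/3))).aestronglyMeasurable
  · rw [MeasureTheory.ae_restrict_iff' measurableSet_Ioc]
    apply MeasureTheory.ae_of_all
    intro t ht
    have ht0 : (0:ℝ) < t := ht.1
    have ht1 : (0:ℝ) < 1 - t := by linarith [ht.2]
    have h1 : (1-t) ^ (-(2:ℝ)/3) ≤ 2 := by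
      have hle : (1/2:ℝ) ≤ 1 - t := by linarith [ht.2]
      have := Real.rpow_le_rpow_of_nonpos (by norm_num : (0:ℝ) < 1/2) hle
        (by norm_num : -(2:ℝ)/3 ≤ 0)
      have h2 : (1/2:ℝ) ^ (-(2:ℝ)/3) ≤ 2 := by
        have hh := Real.rpow_le_rpow_of_exponent_ge (x := (1/2:ℝ)) (y := -(2:ℝ)/3)
          (z := (-1:ℝ)) (by norm_num) (by norm_num) (by norm_num)
        rwa [Real.rpow_neg_one, show ((1/2:ℝ))⁻¹ = 2 by norm_num] at hh
      linarith
    have hnn1 : (0:ℝ) ≤ t ^ (-(2:ℝ)/3) := Real.rpow_nonneg ht0.le _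
    have hnn2 : (0:ℝ) ≤ (1-t) ^ (-(2:ℝ)/3) := Real.rpow_nonneg ht1.le _
    rw [Real.norm_eq_abs, Real.norm_eq_abs, abs_of_nonneg (mul_nonneg hnn1 hnn2),
      abs_of_nonneg (by positivity)]
    nlinarith
lemma II2 : IntervalIntegrable (fun t : ℝ => t ^ (-(2:ℝ)/3) * (1-t) ^ (-(2:ℝ)/3))
    volume (1/2) 1 := by
  have h := (II1.comp_sub_left 1).symm
  convert h using 1
  · exact funext fun x => (ff_symm x).symm
  · norm_num
  · norm_num

lemma symm_half : ∫ t in (0:ℝ)..(1/2), t ^ (-(2:ℝ)/3) * (1-t) ^ (-(2:ℝ)/3)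
    = ∫ t in (1/2:ℝ)..1, t ^ (-(2:ℝ)/3) * (1-t) ^ (-(2:ℝ)/3) := by
  have h := intervalIntegral.integral_comp_sub_left (a := (0:ℝ)) (b := 1/2)
    (fun t : ℝ => t ^ (-(2:ℝ)/3) * (1-t) ^ (-(2:ℝ)/3)) 1
  rw [show (1:ℝ) - 1/2 = 1/2 by norm_num, show (1:ℝ) - 0 = 1 by norm_num] at h
  rw [← h]
  apply intervalIntegral.integral_congr
  intro x _
  exact (ff_symm x).symm

lemma beta_val : ∫ t in (0:ℝ)..1, t ^ (-(2:ℝ)/3) * (1-t) ^ (-(2:ℝ)/3)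
    = Real.Gamma (1/3) ^ 2 / Real.Gamma (2/3) := by
  have hre : (0:ℝ) < Complex.re (1/3 : ℂ) := by norm_num
  have hG := Complex.Gamma_mul_Gamma_eq_betaIntegral (s := 1/3) (t := 1/3) hre hre
  have hbeta : Complex.betaIntegral (1/3) (1/3)
      = ((∫ t in (0:ℝ)..1, t ^ (-(2:ℝ)/3) * (1-t) ^ (-(2:ℝ)/3) : ℝ) : ℂ) := by
    rw [Complex.betaIntegral]
    rw [← intervalIntegral.integral_ofReal]
    apply intervalIntegral.integral_congr
    intro x hx
    rw [Set.uIcc_of_le (by norm_num : (0:ℝ) ≤ 1)] at hx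
    have hx0 : (0:ℝ) ≤ x := hx.1
    have hx1 : (0:ℝ) ≤ 1 - x := by linarith [hx.2]
    simp only
    push_cast
    rw [Complex.ofReal_cpow hx0, Complex.ofReal_cpow hx1]
    norm_num
  rw [hbeta] at hG
  have h13 : (1/3 : ℂ) = ((1/3 : ℝ) : ℂ) := by norm_num
  have h23 : (1/3 : ℂ) + (1/3 : ℂ) = ((2/3 : ℝ) : ℂ) := by norm_num
  rw [h23] at hG
  rw [h13, Complex.Gamma_ofReal, Complex.Gamma_ofReal] at hG
  have hG' : (Real.Gamma (1/3) * Real.Gamma (1/3) : ℝ)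
      = Real.Gamma (2/3) * ∫ t in (0:ℝ)..1, t ^ (-(2:ℝ)/3) * (1-t) ^ (-(2:ℝ)/3) := by
    exact_mod_cast hG
  have hpos : (0:ℝ) < Real.Gamma (2/3) := Real.Gamma_pos_of_pos (by norm_num)
  field_simp
  nlinarith [hG']

lemma term_eq (k : ℕ) :
    pochR (1/3) k * pochR (2/3) k / (pochR (4/3) k * (Nat.factorial k : ℝ)) * (1/2:ℝ) ^ k
      = (1/3) * ((1/2:ℝ) ^ (-((1:ℝ)/3))) * TT k := by
  have hr := ratio13 k
  have hp4 : (0:ℝ) < pochR (4/3) k := pochR_pos (by norm_num) k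
  have hfp : (0:ℝ) < (Nat.factorial k : ℝ) := by exact_mod_cast Nat.factorial_pos k
  have hk : (0:ℝ) < 1/3 + (k:ℝ) := by positivity
  have hpow : ((1/2:ℝ) ^ (-((1:ℝ)/3))) * (1/2:ℝ) ^ ((k:ℝ)+1/3) = (1/2:ℝ) ^ k := by
    rw [← Real.rpow_add (by norm_num), show -((1:ℝ)/3) + ((k:ℝ)+1/3) = (k:ℝ) by ring,
      Real.rpow_natCast]
  have hratio : pochR (1/3) k = (1/3) * pochR (4/3) k / (1/3 + (k:ℝ)) := by
    field_simp
    linarith [hr]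
  rw [TT, cc, hratio, ← hpow]
  field_simp
  ring

lemma F21_eq : F21R (1/3) (2/3) (4/3) (1/2)
    = (1/3) * ((1/2:ℝ) ^ (-((1:ℝ)/3))) * ∑' k, TT k := by
  rw [F21R, ← tsum_mul_left]
  exact tsum_congr term_eq


/-- `𝔓_h(1/2) = 1/2`. -/
theorem stmt11 : Ph (1/2) = 1/2 := by
  have hsum : (∑' k, TT k) = Real.Gamma (1/3) ^ 2 / Real.Gamma (2/3) / 2 := by
    have h1 := claimA
    have h2 := symm_half
    have h3 := beta_val
    have h4 := intervalIntegral.integral_add_adjacent_intervals II1 II2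
    linarith
  rw [Ph, F21_eq, hsum]
  have hG13 : 0 < Real.Gamma (1/3) := Real.Gamma_pos_of_pos (by norm_num)
  have hG23 : 0 < Real.Gamma (2/3) := Real.Gamma_pos_of_pos (by norm_num)
  have hpow : (1/2:ℝ) ^ ((1:ℝ)/3) * (1/2:ℝ) ^ (-((1:ℝ)/3)) = 1 := by
    rw [← Real.rpow_add (by norm_num), show (1:ℝ)/3 + -((1:ℝ)/3) = 0 by ring, Real.rpow_zero]
  field_simp
  ring_nf
  ring_nf at hpow
  linear_combination hpow
end

section
/- ₃F₂(1,1,4/3;2,5/3;1/2) = (1/2) · ₃F₂(1,1,7/6;2,5/3;1), where the series on the right converges because 2 + 5/3 − 1 − 1 − 7/6 = 1/2 > 0. -/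
open scoped BigOperators

namespace S13

lemma pochR_zero (x : ℝ) : pochR x 0 = 1 := by simp [pochR]

lemma pochR_succ (x : ℝ) (k : ℕ) : pochR x (k+1) = pochR x k * (x + k) := by
  simp [pochR, Finset.prod_range_succ]

lemma pochR_pos {x : ℝ} (hx : 0 < x) (k : ℕ) : 0 < pochR x k := by
  induction k with
  | zero => simp [pochR_zero]
  | succ n ih => rw [pochR_succ]; positivity

lemma pochR_one (k : ℕ) : pochR 1 k = Nat.factorial k := by
  induction k with
  | zero => simp [pochR_zero]
  | succ n ih => rw [pochR_succ, ih, Nat.factorial_succ]; push_cast; ring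

lemma pochR_two (k : ℕ) : pochR 2 k = Nat.factorial (k+1) := by
  induction k with
  | zero => simp [pochR_zero]
  | succ n ih =>
      rw [pochR_succ, ih]
      have : (n+1)+1 = (n+2) := rfl
      rw [this, Nat.factorial_succ (n+1)]
      push_cast; ring

/-- coefficients of the left generating function -/
noncomputable def fn (n : ℕ) : ℝ := pochR (4/3) n / pochR (5/3) n
/-- coefficients of the right generating function -/
noncomputable def gn (k : ℕ) : ℝ := pochR (7/6) k / pochR (5/3) k

lemma fn_pos (n : ℕ) : 0 < fn n := div_pos (pochR_pos (by norm_num) n) (pochR_pos (by norm_num) n)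
lemma gn_pos (k : ℕ) : 0 < gn k := div_pos (pochR_pos (by norm_num) k) (pochR_pos (by norm_num) k)

lemma fn_zero : fn 0 = 1 := by simp [fn, pochR_zero]
lemma gn_zero : gn 0 = 1 := by simp [gn, pochR_zero]

lemma fn_succ (n : ℕ) : fn (n+1) * (5/3 + n) = fn n * (4/3 + n) := by
  have h5 : pochR (5/3) n ≠ 0 := ne_of_gt (pochR_pos (by norm_num) n)
  have h5' : (5/3 + (n:ℝ)) ≠ 0 := by positivity
  simp only [fn, pochR_succ]
  field_simp

lemma gn_succ (k : ℕ) : gn (k+1) * (5/3 + k) = gn k * (7/6 + k) := by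
  have h5 : pochR (5/3) k ≠ 0 := ne_of_gt (pochR_pos (by norm_num) k)
  have h5' : (5/3 + (k:ℝ)) ≠ 0 := by positivity
  simp only [gn, pochR_succ]
  field_simp

lemma fn_le_one (n : ℕ) : fn n ≤ 1 := by
  induction n with
  | zero => simp [fn_zero]
  | succ m ih =>
      have h5' : (0:ℝ) < 5/3 + m := by positivity
      have := fn_succ m
      have hm := fn_pos m
      nlinarith [fn_pos (m+1)]

lemma gn_le_one (k : ℕ) : gn k ≤ 1 := by
  induction k with
  | zero => simp [gn_zero]
  | succ m ih =>
      have h5' : (0:ℝ) < 5/3 + m := by positivity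
      have := gn_succ m
      have hm := gn_pos m
      nlinarith [gn_pos (m+1)]

lemma gn_sq (k : ℕ) : gn k ^ 2 * (k + 1) ≤ 1 := by
  induction k with
  | zero => simp [gn_zero]
  | succ m ih =>
      have h5' : (0:ℝ) < 5/3 + m := by positivity
      have hrec := gn_succ m
      have hm := gn_pos m
      have hm1 := gn_pos (m+1)
      -- gn (m+1) = gn m * (7/6+m)/(5/3+m)
      have heq : gn (m+1) = gn m * ((7/6 + m)/(5/3 + m)) := by
        field_simp
        linarith [hrec]
      rw [heq]
      have key : ((7/6 + (m:ℝ))/(5/3 + m))^2 * ((m:ℝ) + 1 + 1) ≤ ((m:ℝ) + 1) := by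
        rw [div_pow, div_mul_eq_mul_div, div_le_iff₀ (by positivity)]
        push_cast
        nlinarith [Nat.cast_nonneg (α := ℝ) m]
      have hgm2 : (0:ℝ) ≤ gn m ^2 := sq_nonneg _
      calc (gn m * ((7/6 + m)/(5/3 + m)))^2 * ((m+1:ℕ) + 1)
          = gn m ^2 * (((7/6 + (m:ℝ))/(5/3 + m))^2 * ((m:ℝ) + 1 + 1)) := by push_cast; ring
        _ ≤ gn m ^2 * ((m:ℝ)+1) := by
            apply mul_le_mul_of_nonneg_left key hgm2
        _ ≤ 1 := by push_cast at ih ⊢; linarith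


section generic

variable {a : ℕ → ℝ} {b : ℝ}

/-- summability of `∑ aₙ xⁿ` for `|x| < 1` when `|aₙ| ≤ 1`. -/
lemma summable_A (ha1 : ∀ n, |a n| ≤ 1) {x : ℝ} (hx : |x| < 1) :
    Summable (fun n => a n * x ^ n) := by
  apply Summable.of_norm_bounded (summable_geometric_of_lt_one (abs_nonneg x) hx)
  intro n
  rw [norm_mul, norm_pow]
  calc ‖a n‖ * ‖x‖ ^ n ≤ 1 * ‖x‖ ^ n := by
        apply mul_le_mul_of_nonneg_right (ha1 n) (by positivity)
    _ = |x| ^ n := by rw [one_mul]; rfl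

lemma summable_nA {r : ℝ} (hr0 : 0 ≤ r) (hr : r < 1) :
    Summable (fun n : ℕ => (n : ℝ) * r ^ (n - 1)) := by
  rw [← summable_nat_add_iff 1]
  have h1 : Summable (fun n : ℕ => (n : ℝ) * r ^ n) := by
    simpa using summable_pow_mul_geometric_of_norm_lt_one (r := r) 1
      (by rwa [Real.norm_eq_abs, abs_of_nonneg hr0])
  have h2 : Summable (fun n : ℕ => r ^ n) := summable_geometric_of_lt_one hr0 hr
  have := h1.add h2
  apply this.congr
  intro n
  push_cast
  ring_nf

/-- summability of termwise-derivative-type series `∑ (n+c) aₙ xⁿ`. -/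
lemma summable_cA (ha1 : ∀ n, |a n| ≤ 1) {c x : ℝ} (hc : |c| ≤ 2) (hx : |x| < 1) :
    Summable (fun n : ℕ => ((n : ℝ) + c) * a n * x ^ n) := by
  have hsum : Summable (fun n : ℕ => ((n : ℝ) + 2) * |x| ^ n) := by
    have h1 : Summable (fun n : ℕ => (n : ℝ) * |x| ^ n) := by
      simpa using summable_pow_mul_geometric_of_norm_lt_one (r := |x|) 1
        (by rwa [Real.norm_eq_abs, abs_abs])
    have h2 : Summable (fun n : ℕ => |x| ^ n) := summable_geometric_of_lt_one (abs_nonneg x) hx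
    have := h1.add (h2.mul_left 2)
    apply this.congr; intro n; ring
  apply Summable.of_norm_bounded hsum
  intro n
  rw [norm_mul, norm_mul, norm_pow, Real.norm_eq_abs, Real.norm_eq_abs, Real.norm_eq_abs]
  have h1 : |(n : ℝ) + c| ≤ (n : ℝ) + 2 := by
    have := abs_add_le (n : ℝ) c
    rw [Nat.abs_cast] at this
    linarith
  have h2 : |a n| * |x| ^ n ≤ 1 * |x| ^ n :=
    mul_le_mul_of_nonneg_right (ha1 n) (by positivity)
  calc |(n:ℝ) + c| * |a n| * |x| ^ n ≤ ((n:ℝ) + 2) * (|a n| * |x| ^ n) := by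
        rw [mul_assoc]
        apply mul_le_mul_of_nonneg_right h1 (by positivity)
    _ ≤ ((n:ℝ) + 2) * (1 * |x| ^ n) := by
        apply mul_le_mul_of_nonneg_left h2 (by positivity)
    _ = ((n:ℝ) + 2) * |x| ^ n := by ring

/-- derivative of the power series. -/
lemma hasDerivAt_A (ha1 : ∀ n, |a n| ≤ 1) {x : ℝ} (hx : |x| < 1) :
    HasDerivAt (fun y => ∑' n, a n * y ^ n) (∑' n, a n * ((n : ℝ) * x ^ (n - 1))) x := by
  set r : ℝ := (|x| + 1) / 2 with hr
  have hxr : |x| < r := by rw [hr]; linarith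
  have hr0 : 0 ≤ r := by positivity
  have hr1 : r < 1 := by rw [hr]; linarith
  apply hasDerivAt_tsum_of_isPreconnected (u := fun n : ℕ => (n : ℝ) * r ^ (n - 1))
    (summable_nA hr0 hr1) isOpen_Ioo (isPreconnected_Ioo) (t := Set.Ioo (-r) r)
    (g' := fun n y => a n * ((n : ℝ) * y ^ (n - 1))) (y₀ := 0)
  · intro n y _
    exact (hasDerivAt_pow n y).const_mul (a n)
  · intro n y hy
    have hylt : |y| ≤ r := by
      rw [abs_le]; constructor <;> [exact hy.1.le; exact hy.2.le]
    rw [Real.norm_eq_abs, abs_mul, abs_mul, Nat.abs_cast, abs_pow]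
    have h1 : |y| ^ (n-1) ≤ r ^ (n-1) := pow_le_pow_left₀ (abs_nonneg y) hylt _
    have h2 := ha1 n
    calc |a n| * ((n:ℝ) * |y| ^ (n-1)) ≤ 1 * ((n:ℝ) * |y| ^ (n-1)) :=
          mul_le_mul_of_nonneg_right h2 (by positivity)
      _ = (n:ℝ) * |y| ^ (n-1) := one_mul _
      _ ≤ (n:ℝ) * r ^ (n-1) := mul_le_mul_of_nonneg_left h1 (Nat.cast_nonneg n)
  · have hrpos : (0:ℝ) < r := by rw [hr]; positivity
    exact Set.mem_Ioo.mpr ⟨by linarith, hrpos⟩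
  · exact summable_A ha1 (by rw [abs_zero]; norm_num)
  · exact Set.mem_Ioo.mpr (abs_lt.mp hxr)

/-- the first-order ODE satisfied by `A(x) = ∑ aₙ xⁿ` when `aₙ₊₁(5/3+n) = aₙ(b+n)`. -/
lemma ode_A (ha0 : a 0 = 1) (ha1 : ∀ n, |a n| ≤ 1) (hb : |b| ≤ 2)
    (hrec : ∀ n : ℕ, a (n+1) * (5/3 + n) = a n * (b + n)) {x : ℝ} (hx : |x| < 1) :
    x * (1-x) * (∑' n, a n * ((n : ℝ) * x ^ (n - 1))) + (2/3 - b*x) * (∑' n, a n * x ^ n)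
      = 2/3 := by
  have hφ : Summable (fun n : ℕ => ((n : ℝ) + 2/3) * a n * x ^ n) :=
    summable_cA ha1 (by rw [abs_of_nonneg] <;> norm_num) hx
  have hψ' : Summable (fun n : ℕ => ((n : ℝ) + b) * a n * x ^ n) := summable_cA ha1 hb hx
  have hψ : Summable (fun n : ℕ => (((n:ℝ) + b) * a n * x ^ n) * x) := hψ'.mul_right x
  -- rewrite first tsum termwise
  have e1 : x * (1-x) * (∑' n, a n * ((n : ℝ) * x ^ (n - 1)))
      = ∑' n : ℕ, ((n:ℝ) * a n * x ^ n - ((n:ℝ) * a n * x ^ n) * x) := by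
    rw [← tsum_mul_left]
    congr 1
    funext n
    rcases n with _ | m
    · simp
    · push_cast
      rw [pow_succ]
      ring
  have e2 : (2/3 - b*x) * (∑' n, a n * x ^ n)
      = ∑' n : ℕ, ((2/3) * a n * x ^ n - (b * a n * x ^ n) * x) := by
    rw [← tsum_mul_left]
    congr 1
    funext n
    ring
  rw [e1, e2]
  have hn1 : Summable (fun n : ℕ => (n:ℝ) * a n * x ^ n) := by
    have := summable_cA ha1 (c := 0) (by norm_num) hx
    simpa using this
  have hn2 : Summable (fun n : ℕ => ((n:ℝ) * a n * x ^ n) * x) := hn1.mul_right x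
  have hc1 : Summable (fun n : ℕ => (2/3 : ℝ) * a n * x ^ n) := by
    have := (summable_A ha1 hx).mul_left (2/3 : ℝ)
    apply this.congr; intro n; ring
  have hc2 : Summable (fun n : ℕ => ((b:ℝ) * a n * x ^ n) * x) := by
    have := ((summable_A ha1 hx).mul_left b).mul_right x
    apply this.congr; intro n; ring
  rw [Summable.tsum_sub hn1 hn2, Summable.tsum_sub hc1 hc2]
  have comb1 : (∑' n : ℕ, (n:ℝ) * a n * x ^ n) + (∑' n : ℕ, (2/3:ℝ) * a n * x ^ n)
      = ∑' n : ℕ, ((n:ℝ) + 2/3) * a n * x ^ n := by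
    rw [← Summable.tsum_add hn1 hc1]; exact tsum_congr (fun n => by ring)
  have comb2 : (∑' n : ℕ, ((n:ℝ) * a n * x ^ n) * x) + (∑' n : ℕ, (b * a n * x ^ n) * x)
      = ∑' n : ℕ, (((n:ℝ) + b) * a n * x ^ n) * x := by
    rw [← Summable.tsum_add hn2 hc2]; exact tsum_congr (fun n => by ring)
  have shift : ∑' n : ℕ, ((n:ℝ) + 2/3) * a n * x ^ n
      = 2/3 + ∑' n : ℕ, (((n:ℝ) + b) * a n * x ^ n) * x := by
    rw [Summable.tsum_eq_zero_add hφ]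
    congr 1
    · simp [ha0]
    · exact tsum_congr (fun m => by
        have h := hrec m
        push_cast
        rw [pow_succ]
        linear_combination (x ^ m * x) * h)
  linarith

end generic

noncomputable def FF (x : ℝ) : ℝ := ∑' n : ℕ, fn n * x ^ n
noncomputable def GG (x : ℝ) : ℝ := ∑' n : ℕ, gn n * x ^ n
noncomputable def DF (x : ℝ) : ℝ := ∑' n : ℕ, fn n * ((n : ℝ) * x ^ (n - 1))
noncomputable def DG (x : ℝ) : ℝ := ∑' n : ℕ, gn n * ((n : ℝ) * x ^ (n - 1))

lemma fn_abs (n : ℕ) : |fn n| ≤ 1 := by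
  rw [abs_of_pos (fn_pos n)]; exact fn_le_one n
lemma gn_abs (n : ℕ) : |gn n| ≤ 1 := by
  rw [abs_of_pos (gn_pos n)]; exact gn_le_one n

lemma hasDerivAt_FF {x : ℝ} (hx : |x| < 1) : HasDerivAt FF (DF x) x :=
  hasDerivAt_A fn_abs hx

lemma hasDerivAt_GG {x : ℝ} (hx : |x| < 1) : HasDerivAt GG (DG x) x :=
  hasDerivAt_A gn_abs hx

lemma ode_FF {x : ℝ} (hx : |x| < 1) :
    x * (1-x) * DF x + (2/3 - (4/3)*x) * FF x = 2/3 :=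
  ode_A fn_zero fn_abs (by rw [abs_of_nonneg] <;> norm_num) fn_succ hx

lemma ode_GG {x : ℝ} (hx : |x| < 1) :
    x * (1-x) * DG x + (2/3 - (7/6)*x) * GG x = 2/3 :=
  ode_A gn_zero gn_abs (by rw [abs_of_nonneg] <;> norm_num) gn_succ hx

lemma FF_nonneg {x : ℝ} (hx : 0 ≤ x) : 0 ≤ FF x :=
  tsum_nonneg (fun n => mul_nonneg (fn_pos n).le (pow_nonneg hx n))

lemma GG_nonneg {x : ℝ} (hx : 0 ≤ x) : 0 ≤ GG x :=
  tsum_nonneg (fun n => mul_nonneg (gn_pos n).le (pow_nonneg hx n))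

lemma FF_le {x : ℝ} (hx : 0 ≤ x) (hx1 : x < 1) : FF x ≤ (1-x)⁻¹ := by
  rw [← tsum_geometric_of_lt_one hx hx1]
  apply Summable.tsum_le_tsum _ (summable_A fn_abs (by rwa [abs_of_nonneg hx]))
    (summable_geometric_of_lt_one hx hx1)
  intro n
  calc fn n * x ^ n ≤ 1 * x ^ n :=
        mul_le_mul_of_nonneg_right (fn_le_one n) (pow_nonneg hx n)
    _ = x ^ n := one_mul _

lemma GG_le {x : ℝ} (hx : 0 ≤ x) (hx1 : x < 1) : GG x ≤ (1-x)⁻¹ := by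
  rw [← tsum_geometric_of_lt_one hx hx1]
  apply Summable.tsum_le_tsum _ (summable_A gn_abs (by rwa [abs_of_nonneg hx]))
    (summable_geometric_of_lt_one hx hx1)
  intro n
  calc gn n * x ^ n ≤ 1 * x ^ n :=
        mul_le_mul_of_nonneg_right (gn_le_one n) (pow_nonneg hx n)
    _ = x ^ n := one_mul _

noncomputable def Lf (z : ℝ) : ℝ := z ^ (2/3 : ℝ) * (1-z) ^ (2/3 : ℝ) * FF z
noncomputable def Mf (w : ℝ) : ℝ := w ^ (2/3 : ℝ) * (1-w) ^ (1/2 : ℝ) * GG w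
noncomputable def Nf (z : ℝ) : ℝ := Mf (4*z*(1-z))
noncomputable def Af (z : ℝ) : ℝ := Lf z - (4:ℝ) ^ (-(2/3) : ℝ) * Nf z

lemma hasDerivAt_Lf {z : ℝ} (hz : z ∈ Set.Ioo (0:ℝ) 1) :
    HasDerivAt Lf ((2/3) * z ^ (-(1/3) : ℝ) * (1-z) ^ (-(1/3) : ℝ)) z := by
  obtain ⟨h0, h1⟩ := hz
  have h1' : (0:ℝ) < 1 - z := by linarith
  have he : (2/3 - 1 : ℝ) = -(1/3) := by norm_num
  have hd1 : HasDerivAt (fun z : ℝ => z ^ (2/3 : ℝ)) ((2/3) * z ^ (-(1/3) : ℝ)) z := by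
    have := Real.hasDerivAt_rpow_const (x := z) (p := 2/3) (Or.inl (ne_of_gt h0))
    rwa [he] at this
  have hin : HasDerivAt (fun z : ℝ => 1 - z) (-1) z := by
    simpa using (hasDerivAt_id z).const_sub 1
  have hd2 : HasDerivAt (fun z : ℝ => (1-z) ^ (2/3 : ℝ))
      ((2/3) * (1-z) ^ (-(1/3) : ℝ) * (-1)) z := by
    have houter : HasDerivAt (fun y : ℝ => y ^ (2/3 : ℝ))
        ((2/3) * (1-z) ^ (-(1/3) : ℝ)) (1-z) := by
      have := Real.hasDerivAt_rpow_const (x := (1-z)) (p := 2/3) (Or.inl (ne_of_gt h1'))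
      rwa [he] at this
    exact houter.comp z hin
  have hd3 : HasDerivAt FF (DF z) z := hasDerivAt_FF (by rw [abs_lt]; constructor <;> linarith)
  have hD := (hd1.mul hd2).mul hd3
  have hode := ode_FF (x := z) (by rw [abs_lt]; constructor <;> linarith)
  unfold Lf
  convert hD using 1
  · rfl
  · rfl
  · rfl
  have e1 : z ^ (2/3 : ℝ) = z * z ^ (-(1/3) : ℝ) := by
    have : (2/3 : ℝ) = 1 + (-(1/3)) := by norm_num
    rw [this, Real.rpow_add h0, Real.rpow_one]
  have e2 : (1-z) ^ (2/3 : ℝ) = (1-z) * (1-z) ^ (-(1/3) : ℝ) := by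
    have : (2/3 : ℝ) = 1 + (-(1/3)) := by norm_num
    rw [this, Real.rpow_add h1', Real.rpow_one]
  simp only [Pi.mul_apply]
  rw [e1, e2]
  linear_combination (-(z ^ (-(1/3) : ℝ) * (1-z) ^ (-(1/3) : ℝ))) * hode

lemma hasDerivAt_Mf {w : ℝ} (hw : w ∈ Set.Ioo (0:ℝ) 1) :
    HasDerivAt Mf ((2/3) * w ^ (-(1/3) : ℝ) * (1-w) ^ (-(1/2) : ℝ)) w := by
  obtain ⟨h0, h1⟩ := hw
  have h1' : (0:ℝ) < 1 - w := by linarith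
  have he : (2/3 - 1 : ℝ) = -(1/3) := by norm_num
  have he2 : (1/2 - 1 : ℝ) = -(1/2) := by norm_num
  have hd1 : HasDerivAt (fun w : ℝ => w ^ (2/3 : ℝ)) ((2/3) * w ^ (-(1/3) : ℝ)) w := by
    have := Real.hasDerivAt_rpow_const (x := w) (p := 2/3) (Or.inl (ne_of_gt h0))
    rwa [he] at this
  have hin : HasDerivAt (fun w : ℝ => 1 - w) (-1) w := by
    simpa using (hasDerivAt_id w).const_sub 1
  have hd2 : HasDerivAt (fun w : ℝ => (1-w) ^ (1/2 : ℝ))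
      ((1/2) * (1-w) ^ (-(1/2) : ℝ) * (-1)) w := by
    have houter : HasDerivAt (fun y : ℝ => y ^ (1/2 : ℝ))
        ((1/2) * (1-w) ^ (-(1/2) : ℝ)) (1-w) := by
      have := Real.hasDerivAt_rpow_const (x := (1-w)) (p := 1/2) (Or.inl (ne_of_gt h1'))
      rwa [he2] at this
    exact houter.comp w hin
  have hd3 : HasDerivAt GG (DG w) w := hasDerivAt_GG (by rw [abs_lt]; constructor <;> linarith)
  have hD := (hd1.mul hd2).mul hd3
  have hode := ode_GG (x := w) (by rw [abs_lt]; constructor <;> linarith)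
  unfold Mf
  convert hD using 1
  · rfl
  · rfl
  · rfl
  have e1 : w ^ (2/3 : ℝ) = w * w ^ (-(1/3) : ℝ) := by
    have : (2/3 : ℝ) = 1 + (-(1/3)) := by norm_num
    rw [this, Real.rpow_add h0, Real.rpow_one]
  have e2 : (1-w) ^ (1/2 : ℝ) = (1-w) * (1-w) ^ (-(1/2) : ℝ) := by
    have h12 : (1/2 : ℝ) = 1 + (-(1/2)) := by norm_num
    conv_lhs => rw [h12, Real.rpow_add h1', Real.rpow_one]
  simp only [Pi.mul_apply]
  rw [e1, e2]
  linear_combination (-(w ^ (-(1/3) : ℝ) * (1-w) ^ (-(1/2) : ℝ))) * hode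

lemma P_mem {z : ℝ} (hz : z ∈ Set.Ioo (0:ℝ) (1/2)) :
    4*z*(1-z) ∈ Set.Ioo (0:ℝ) 1 := by
  obtain ⟨h0, h1⟩ := hz
  constructor
  · nlinarith
  · nlinarith [sq_nonneg (1 - 2*z)]

lemma hasDerivAt_P (z : ℝ) : HasDerivAt (fun z : ℝ => 4*z*(1-z)) (4 - 8*z) z := by
  have h1 : HasDerivAt (fun z : ℝ => 4*z) 4 z := by
    simpa using (hasDerivAt_id z).const_mul 4
  have h2 : HasDerivAt (fun z : ℝ => 1 - z) (-1) z := by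
    simpa using (hasDerivAt_id z).const_sub 1
  have := h1.mul h2
  convert this using 1
  · rfl
  · rfl
  · rfl
  ring

lemma hasDerivAt_Af {z : ℝ} (hz : z ∈ Set.Ioo (0:ℝ) (1/2)) : HasDerivAt Af 0 z := by
  obtain ⟨h0, h1⟩ := hz
  have h1' : (0:ℝ) < 1 - z := by linarith
  have h2z : (0:ℝ) < 1 - 2*z := by linarith
  have hzIoo : z ∈ Set.Ioo (0:ℝ) 1 := ⟨h0, by linarith⟩
  have hL := hasDerivAt_Lf hzIoo
  have hMP := (hasDerivAt_Mf (P_mem ⟨h0, h1⟩)).comp z (hasDerivAt_P z)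
  have hN : HasDerivAt Nf
      ((2/3) * (4*z*(1-z)) ^ (-(1/3) : ℝ) * (1-(4*z*(1-z))) ^ (-(1/2) : ℝ) * (4 - 8*z)) z := by
    exact hMP
  have hA := hL.sub ((hN.const_mul ((4:ℝ) ^ (-(2/3) : ℝ))))
  convert hA using 1
  · rfl
  · rfl
  · rfl
  -- show 0 = L' - 4^{-2/3} * N'
  have hPpos : (0:ℝ) < 4*z*(1-z) := (P_mem ⟨h0, h1⟩).1
  have efac : ((4*z*(1-z)) : ℝ) ^ (-(1/3) : ℝ)
      = (4:ℝ) ^ (-(1/3) : ℝ) * z ^ (-(1/3) : ℝ) * (1-z) ^ (-(1/3) : ℝ) := by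
    rw [Real.mul_rpow (by positivity) h1'.le, Real.mul_rpow (by norm_num) h0.le]
  have esq : ((1-(4*z*(1-z))) : ℝ) ^ (-(1/2) : ℝ) = (1-2*z)⁻¹ := by
    have h : (1-(4*z*(1-z)) : ℝ) = (1-2*z)^2 := by ring
    rw [h, ← Real.rpow_natCast (1-2*z) 2, ← Real.rpow_mul h2z.le]
    norm_num [Real.rpow_neg_one]
  have e4 : (4:ℝ) ^ (-(2/3) : ℝ) * (4:ℝ) ^ (-(1/3) : ℝ) = 4⁻¹ := by
    rw [← Real.rpow_add (by norm_num)]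
    norm_num [Real.rpow_neg_one]
  rw [efac, esq]
  have hinv : (1-2*z)⁻¹ * (4 - 8*z) = 4 := by
    field_simp
    ring
  have expand : (4:ℝ) ^ (-(2/3) : ℝ) *
      (2/3 * ((4:ℝ) ^ (-(1/3) : ℝ) * z ^ (-(1/3) : ℝ) * (1-z) ^ (-(1/3) : ℝ)) *
        (1-2*z)⁻¹ * (4 - 8*z))
      = 2/3 * z ^ (-(1/3) : ℝ) * (1-z) ^ (-(1/3) : ℝ) := by
    calc (4:ℝ) ^ (-(2/3) : ℝ) *
        (2/3 * ((4:ℝ) ^ (-(1/3) : ℝ) * z ^ (-(1/3) : ℝ) * (1-z) ^ (-(1/3) : ℝ)) *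
          (1-2*z)⁻¹ * (4 - 8*z))
        = ((4:ℝ) ^ (-(2/3) : ℝ) * (4:ℝ) ^ (-(1/3) : ℝ)) *
            ((1-2*z)⁻¹ * (4 - 8*z)) * (2/3 * z ^ (-(1/3) : ℝ) * (1-z) ^ (-(1/3) : ℝ)) := by
          ring
      _ = 4⁻¹ * 4 * (2/3 * z ^ (-(1/3) : ℝ) * (1-z) ^ (-(1/3) : ℝ)) := by rw [e4, hinv]
      _ = 2/3 * z ^ (-(1/3) : ℝ) * (1-z) ^ (-(1/3) : ℝ) := by norm_num
  rw [expand]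
  ring

lemma Af_const {z y : ℝ} (hz : z ∈ Set.Ioo (0:ℝ) (1/2)) (hy : y ∈ Set.Ioo (0:ℝ) (1/2)) :
    Af z = Af y := by
  wlog h : z ≤ y generalizing z y
  · exact (this hy hz (by linarith)).symm
  rcases eq_or_lt_of_le h with rfl | hlt
  · rfl
  have hsub : Set.Icc z y ⊆ Set.Ioo (0:ℝ) (1/2) := fun x hx =>
    ⟨lt_of_lt_of_le hz.1 hx.1, lt_of_le_of_lt hx.2 hy.2⟩
  have key := constant_of_has_deriv_right_zero (f := Af) (a := z) (b := y)
    (fun x hx => (hasDerivAt_Af (hsub hx)).continuousAt.continuousWithinAt)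
    (fun x hx => (hasDerivAt_Af (hsub ⟨hx.1, hx.2.le⟩)).hasDerivWithinAt)
  exact (key y (Set.right_mem_Icc.mpr h)).symm

lemma Af_tendsto_bound :
    Filter.Tendsto Af (nhdsWithin 0 (Set.Ioi 0)) (nhds 0) := by
  apply squeeze_zero_norm' (a := fun z => 10 * z ^ (2/3 : ℝ))
  · have hmem : Set.Ioo (0:ℝ) (1/8) ∈ nhdsWithin (0:ℝ) (Set.Ioi 0) :=
      Ioo_mem_nhdsGT_of_mem (by norm_num)
    filter_upwards [hmem] with z hz
    obtain ⟨h0, h8⟩ := hz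
    have h1' : (0:ℝ) < 1 - z := by linarith
    have hz23 : (0:ℝ) ≤ z ^ (2/3 : ℝ) := Real.rpow_nonneg h0.le _
    have hPpos : (0:ℝ) < 4*z*(1-z) := by nlinarith
    have hPle : 4*z*(1-z) ≤ 4*z := by nlinarith
    have hPhalf : 4*z*(1-z) ≤ 1/2 := by nlinarith
    have hP1 : 4*z*(1-z) < 1 := by linarith
    -- bound on Lf
    have hLle : Lf z ≤ 2 * z ^ (2/3 : ℝ) := by
      have hFF : FF z ≤ (1-z)⁻¹ := FF_le h0.le (by linarith)
      have hFF2 : FF z ≤ 2 := by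
        refine le_trans hFF ?_
        rw [inv_le_comm₀ h1' (by norm_num)]
        linarith
      have h1z : (1-z) ^ (2/3 : ℝ) ≤ 1 :=
        Real.rpow_le_one h1'.le (by linarith) (by norm_num)
      have h1z0 : (0:ℝ) ≤ (1-z) ^ (2/3 : ℝ) := Real.rpow_nonneg h1'.le _
      have hFF0 : 0 ≤ FF z := FF_nonneg h0.le
      calc Lf z = z ^ (2/3 : ℝ) * ((1-z) ^ (2/3 : ℝ) * FF z) := by rw [Lf]; ring
        _ ≤ z ^ (2/3 : ℝ) * (1 * 2) := by
            apply mul_le_mul_of_nonneg_left _ hz23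
            exact mul_le_mul h1z hFF2 hFF0 (by norm_num)
        _ = 2 * z ^ (2/3 : ℝ) := by ring
    have hL0 : 0 ≤ Lf z := by
      apply mul_nonneg (mul_nonneg hz23 (Real.rpow_nonneg h1'.le _)) (FF_nonneg h0.le)
    -- bound on Nf
    have hNle : Nf z ≤ 8 * z ^ (2/3 : ℝ) := by
      have hGP : GG (4*z*(1-z)) ≤ (1-(4*z*(1-z)))⁻¹ := GG_le hPpos.le hP1
      have hGP2 : GG (4*z*(1-z)) ≤ 2 := by
        refine le_trans hGP ?_
        rw [inv_le_comm₀ (by linarith) (by norm_num)]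
        linarith
      have hsq : (1-(4*z*(1-z))) ^ (1/2 : ℝ) ≤ 1 :=
        Real.rpow_le_one (by linarith) (by linarith [hPpos]) (by norm_num)
      have hsq0 : (0:ℝ) ≤ (1-(4*z*(1-z))) ^ (1/2 : ℝ) := Real.rpow_nonneg (by linarith) _
      have hP23 : (4*z*(1-z)) ^ (2/3 : ℝ) ≤ 4 * z ^ (2/3 : ℝ) := by
        calc (4*z*(1-z)) ^ (2/3 : ℝ) ≤ (4*z) ^ (2/3 : ℝ) :=
              Real.rpow_le_rpow hPpos.le hPle (by norm_num)
          _ = (4:ℝ) ^ (2/3 : ℝ) * z ^ (2/3 : ℝ) := Real.mul_rpow (by norm_num) h0.le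
          _ ≤ 4 * z ^ (2/3 : ℝ) := by
              apply mul_le_mul_of_nonneg_right _ hz23
              calc (4:ℝ) ^ (2/3 : ℝ) ≤ (4:ℝ) ^ (1 : ℝ) :=
                    Real.rpow_le_rpow_of_exponent_le (by norm_num) (by norm_num)
                _ = 4 := Real.rpow_one 4
      have hG0 : 0 ≤ GG (4*z*(1-z)) := GG_nonneg hPpos.le
      have hP230 : (0:ℝ) ≤ (4*z*(1-z)) ^ (2/3 : ℝ) := Real.rpow_nonneg hPpos.le _
      calc Nf z = (4*z*(1-z)) ^ (2/3 : ℝ) * ((1-(4*z*(1-z))) ^ (1/2 : ℝ) * GG (4*z*(1-z))) := by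
            rw [Nf, Mf]; ring
        _ ≤ (4 * z ^ (2/3 : ℝ)) * (1 * 2) := by
            apply mul_le_mul hP23 (mul_le_mul hsq hGP2 hG0 (by norm_num))
              (mul_nonneg hsq0 hG0) (by positivity)
        _ = 8 * z ^ (2/3 : ℝ) := by ring
    have hN0 : 0 ≤ Nf z := by
      rw [Nf, Mf]
      apply mul_nonneg (mul_nonneg (Real.rpow_nonneg hPpos.le _) (Real.rpow_nonneg (by linarith) _))
        (GG_nonneg hPpos.le)
    have hc4 : (0:ℝ) ≤ (4:ℝ) ^ (-(2/3) : ℝ) := Real.rpow_nonneg (by norm_num) _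
    have hc4' : (4:ℝ) ^ (-(2/3) : ℝ) ≤ 1 :=
      Real.rpow_le_one_of_one_le_of_nonpos (by norm_num) (by norm_num)
    rw [Real.norm_eq_abs, abs_le]
    constructor
    · have : (4:ℝ) ^ (-(2/3) : ℝ) * Nf z ≤ 8 * z ^ (2/3 : ℝ) := by
        calc (4:ℝ) ^ (-(2/3) : ℝ) * Nf z ≤ 1 * Nf z := mul_le_mul_of_nonneg_right hc4' hN0
          _ = Nf z := one_mul _
          _ ≤ 8 * z ^ (2/3 : ℝ) := hNle
      rw [Af]
      linarith
    · have : (0:ℝ) ≤ (4:ℝ) ^ (-(2/3) : ℝ) * Nf z := mul_nonneg hc4 hN0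
      rw [Af]
      linarith
  · have hcont : ContinuousAt (fun x : ℝ => x ^ (2/3 : ℝ)) 0 :=
      Real.continuousAt_rpow_const 0 (2/3) (Or.inr (by norm_num))
    have h0 : (0:ℝ) ^ (2/3 : ℝ) = 0 := Real.zero_rpow (by norm_num)
    have h2 : Filter.Tendsto (fun x : ℝ => x ^ (2/3 : ℝ)) (nhdsWithin 0 (Set.Ioi 0))
        (nhds ((0:ℝ) ^ (2/3 : ℝ))) :=
      (hcont.continuousWithinAt (s := Set.Ioi 0)).tendsto
    rw [h0] at h2
    have h3 := h2.const_mul (10:ℝ)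
    simpa using h3

lemma Af_zero {z : ℝ} (hz : z ∈ Set.Ioo (0:ℝ) (1/2)) : Af z = 0 := by
  have hq : (1/4 : ℝ) ∈ Set.Ioo (0:ℝ) (1/2) := by norm_num
  have hconst : Af z = Af (1/4) := Af_const hz hq
  have hmem : Set.Ioo (0:ℝ) (1/2) ∈ nhdsWithin (0:ℝ) (Set.Ioi 0) :=
    Ioo_mem_nhdsGT_of_mem (by norm_num)
  have htc : Filter.Tendsto Af (nhdsWithin 0 (Set.Ioi 0)) (nhds (Af (1/4))) := by
    apply Filter.Tendsto.congr' _ (tendsto_const_nhds (α := ℝ))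
    filter_upwards [hmem] with x hx
    exact (Af_const hq hx)
  have := tendsto_nhds_unique htc Af_tendsto_bound
  rw [hconst, this]

lemma FG_eq {z : ℝ} (hz : z ∈ Set.Ioo (0:ℝ) (1/2)) :
    FF z = (1 - 2*z) * GG (4*z*(1-z)) := by
  obtain ⟨h0, h1⟩ := hz
  have h1' : (0:ℝ) < 1 - z := by linarith
  have h2z : (0:ℝ) < 1 - 2*z := by linarith
  have hPpos : (0:ℝ) < 4*z*(1-z) := by nlinarith
  have hA := Af_zero ⟨h0, h1⟩
  rw [Af, sub_eq_zero, Lf, Nf, Mf] at hA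
  have esq : ((1-(4*z*(1-z))) : ℝ) ^ (1/2 : ℝ) = 1-2*z := by
    have h : (1-(4*z*(1-z)) : ℝ) = (1-2*z)^2 := by ring
    rw [h, ← Real.rpow_natCast (1-2*z) 2, ← Real.rpow_mul h2z.le]
    norm_num
  have efac : ((4*z*(1-z)) : ℝ) ^ (2/3 : ℝ)
      = (4:ℝ) ^ (2/3 : ℝ) * (z ^ (2/3 : ℝ) * (1-z) ^ (2/3 : ℝ)) := by
    rw [Real.mul_rpow (by positivity) h1'.le, Real.mul_rpow (by norm_num) h0.le]
    ring
  have e4 : (4:ℝ) ^ (-(2/3) : ℝ) * (4:ℝ) ^ (2/3 : ℝ) = 1 := by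
    rw [← Real.rpow_add (by norm_num)]
    norm_num
  rw [esq, efac] at hA
  have hz23 : (0:ℝ) < z ^ (2/3 : ℝ) := Real.rpow_pos_of_pos h0 _
  have h1z23 : (0:ℝ) < (1-z) ^ (2/3 : ℝ) := Real.rpow_pos_of_pos h1' _
  have key : z ^ (2/3 : ℝ) * (1-z) ^ (2/3 : ℝ) * FF z
      = z ^ (2/3 : ℝ) * (1-z) ^ (2/3 : ℝ) * ((1-2*z) * GG (4*z*(1-z))) := by
    rw [hA]
    calc (4:ℝ) ^ (-(2/3) : ℝ) * ((4:ℝ) ^ (2/3 : ℝ) * (z ^ (2/3 : ℝ) * (1-z) ^ (2/3 : ℝ)) *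
          (1-2*z) * GG (4*z*(1-z)))
        = ((4:ℝ) ^ (-(2/3) : ℝ) * (4:ℝ) ^ (2/3 : ℝ)) * (z ^ (2/3 : ℝ) * (1-z) ^ (2/3 : ℝ) *
            ((1-2*z) * GG (4*z*(1-z)))) := by ring
      _ = z ^ (2/3 : ℝ) * (1-z) ^ (2/3 : ℝ) * ((1-2*z) * GG (4*z*(1-z))) := by
          rw [e4]; ring
  have hne : z ^ (2/3 : ℝ) * (1-z) ^ (2/3 : ℝ) ≠ 0 := by positivity
  exact mul_left_cancel₀ hne key

open MeasureTheory

lemma summable_b : Summable (fun k : ℕ => gn k / (k+1)) := by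
  have hsum : Summable (fun k : ℕ => ((k:ℝ)+1) ^ (-(3/2) : ℝ)) := by
    have h := (Real.summable_one_div_nat_rpow (p := 3/2)).mpr (by norm_num)
    rw [← summable_nat_add_iff 1] at h
    apply h.congr
    intro n
    rw [Real.rpow_neg (by positivity), ← one_div]
    push_cast
    norm_num
  apply Summable.of_nonneg_of_le (fun k => div_nonneg (gn_pos k).le (by positivity)) _ hsum
  intro k
  set t : ℝ := (k:ℝ) + 1 with ht_def
  have ht : (0:ℝ) < t := by positivity
  have hsq : gn k ^ 2 ≤ t⁻¹ := by
    rw [inv_eq_one_div, le_div_iff₀ ht]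
    exact gn_sq k
  have hr : (0:ℝ) < t ^ (-(1/2) : ℝ) := Real.rpow_pos_of_pos ht _
  have hr2 : (t ^ (-(1/2) : ℝ)) ^ (2:ℕ) = t⁻¹ := by
    rw [← Real.rpow_natCast (t ^ (-(1/2) : ℝ)) 2, ← Real.rpow_mul ht.le]
    norm_num [Real.rpow_neg_one]
  have h1 : gn k ≤ t ^ (-(1/2) : ℝ) := by
    nlinarith [gn_pos k, sq_nonneg (gn k - t ^ (-(1/2) : ℝ)), sq_nonneg (gn k + t ^ (-(1/2) : ℝ))]
  calc gn k / ((k:ℝ)+1) = gn k * t⁻¹ := by rw [div_eq_mul_inv]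
    _ ≤ t ^ (-(1/2) : ℝ) * t⁻¹ := mul_le_mul_of_nonneg_right h1 (inv_nonneg.mpr ht.le)
    _ = t ^ (-(1/2) : ℝ) * t ^ (-(1) : ℝ) := by rw [Real.rpow_neg_one]
    _ = t ^ (-(3/2) : ℝ) := by rw [← Real.rpow_add ht]; norm_num

lemma summable_term_b (c : ℝ) : Summable (fun k : ℕ => gn k / (k+1) * c) :=
  summable_b.mul_right c

lemma intF (n : ℕ) : ∫ z in Set.Ioc (0:ℝ) (1/2), fn n * z ^ n
    = fn n * ((1/2:ℝ) ^ (n+1) / (n+1)) := by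
  rw [← intervalIntegral.integral_of_le (by norm_num : (0:ℝ) ≤ 1/2)]
  rw [intervalIntegral.integral_const_mul, integral_pow]
  rw [zero_pow (Nat.succ_ne_zero n)]
  norm_num

lemma intG (k : ℕ) : ∫ z in Set.Ioc (0:ℝ) (1/2), gn k * ((4*z*(1-z)) ^ k * (1-2*z))
    = gn k * (1/(4*((k:ℝ)+1))) := by
  rw [← intervalIntegral.integral_of_le (by norm_num : (0:ℝ) ≤ 1/2)]
  rw [intervalIntegral.integral_const_mul]
  congr 1
  have hderiv : ∀ x ∈ Set.uIcc (0:ℝ) (1/2),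
      HasDerivAt (fun z : ℝ => (4*z*(1-z)) ^ (k+1) / (4*((k:ℝ)+1)))
        ((4*x*(1-x)) ^ k * (1-2*x)) x := by
    intro x _
    have hP : HasDerivAt (fun z : ℝ => 4*z*(1-z)) (4 - 8*x) x := by
      have h1 : HasDerivAt (fun z : ℝ => 4*z) 4 x := by
        simpa using (hasDerivAt_id x).const_mul 4
      have h2 : HasDerivAt (fun z : ℝ => 1 - z) (-1) x := by
        simpa using (hasDerivAt_id x).const_sub 1
      have := h1.mul h2
      convert this using 1
      · rfl
      · rfl
      · rfl
      ring
    have hpow := hP.pow (k+1)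
    have := hpow.div_const (4*((k:ℝ)+1))
    convert this using 1
    · rfl
    · rfl
    · rfl
    have hk : ((k:ℝ)+1) ≠ 0 := by positivity
    rw [Nat.add_sub_cancel]
    field_simp
    push_cast
    ring
  have hcont : IntervalIntegrable (fun x : ℝ => (4*x*(1-x)) ^ k * (1-2*x)) volume 0 (1/2) := by
    apply Continuous.intervalIntegrable
    continuity
  have := intervalIntegral.integral_eq_sub_of_hasDerivAt hderiv hcont
  rw [this]
  norm_num

lemma hFint (n : ℕ) : IntegrableOn (fun z : ℝ => fn n * z ^ n) (Set.Ioc (0:ℝ) (1/2)) volume := by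
  apply Continuous.integrableOn_Ioc
  continuity

lemma hGint (k : ℕ) : IntegrableOn (fun z : ℝ => gn k * ((4*z*(1-z)) ^ k * (1-2*z)))
    (Set.Ioc (0:ℝ) (1/2)) volume := by
  apply Continuous.integrableOn_Ioc
  continuity

lemma normF (n : ℕ) : ∫ z in Set.Ioc (0:ℝ) (1/2), ‖fn n * z ^ n‖
    = fn n * ((1/2:ℝ) ^ (n+1) / (n+1)) := by
  rw [← intF n]
  apply setIntegral_congr_fun measurableSet_Ioc
  intro z hz
  dsimp only
  rw [Real.norm_eq_abs, abs_of_nonneg (mul_nonneg (fn_pos n).le (pow_nonneg hz.1.le n))]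

lemma normG (k : ℕ) : ∫ z in Set.Ioc (0:ℝ) (1/2), ‖gn k * ((4*z*(1-z)) ^ k * (1-2*z))‖
    = gn k * (1/(4*((k:ℝ)+1))) := by
  rw [← intG k]
  apply setIntegral_congr_fun measurableSet_Ioc
  intro z hz
  dsimp only
  have h1 : (0:ℝ) ≤ 4*z*(1-z) := by nlinarith [hz.1, hz.2]
  have h2 : (0:ℝ) ≤ 1-2*z := by linarith [hz.2]
  rw [Real.norm_eq_abs, abs_of_nonneg]
  exact mul_nonneg (gn_pos k).le (mul_nonneg (pow_nonneg h1 k) h2)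

lemma swapF : (∑' n : ℕ, ∫ z in Set.Ioc (0:ℝ) (1/2), fn n * z ^ n)
    = ∫ z in Set.Ioc (0:ℝ) (1/2), FF z := by
  apply integral_tsum_of_summable_integral_norm hFint
  apply Summable.of_nonneg_of_le (fun n => by positivity) _
    (summable_geometric_of_lt_one (by norm_num : (0:ℝ) ≤ 1/2) (by norm_num))
  intro n
  rw [normF]
  have hn : (0:ℝ) < (n:ℝ) + 1 := by positivity
  have h1 : (1/2:ℝ) ^ (n+1) / ((n:ℝ)+1) ≤ (1/2:ℝ) ^ n := by
    rw [div_le_iff₀ hn, pow_succ]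
    have h2 : (1/2:ℝ) ^ n * (1/2) ≤ (1/2:ℝ) ^ n * 1 := by
      apply mul_le_mul_of_nonneg_left (by norm_num) (by positivity)
    have h3 : (1:ℝ) ≤ (n:ℝ) + 1 := by linarith [Nat.cast_nonneg (α := ℝ) n]
    nlinarith [pow_nonneg (by norm_num : (0:ℝ) ≤ 1/2) n]
  calc fn n * ((1/2:ℝ) ^ (n+1) / ((n:ℝ)+1)) ≤ 1 * ((1/2:ℝ) ^ n) := by
        apply mul_le_mul (fn_le_one n) h1 (by positivity) (by norm_num)
    _ = (1/2:ℝ) ^ n := one_mul _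

lemma swapG : (∑' k : ℕ, ∫ z in Set.Ioc (0:ℝ) (1/2), gn k * ((4*z*(1-z)) ^ k * (1-2*z)))
    = ∫ z in Set.Ioc (0:ℝ) (1/2), (∑' k : ℕ, gn k * ((4*z*(1-z)) ^ k * (1-2*z))) := by
  apply integral_tsum_of_summable_integral_norm hGint
  have hs : Summable (fun k : ℕ => gn k / ((k:ℝ)+1) * (1/4)) := summable_term_b (1/4)
  apply hs.congr
  intro k
  rw [normG, mul_one_div, div_div, mul_one_div, mul_comm ((k:ℝ)+1) 4]

lemma integrand_eq : ∀ z ∈ Set.Ioo (0:ℝ) (1/2),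
    (∑' k : ℕ, gn k * ((4*z*(1-z)) ^ k * (1-2*z))) = FF z := by
  intro z hz
  have h1 : (∑' k : ℕ, gn k * ((4*z*(1-z)) ^ k * (1-2*z)))
      = (∑' k : ℕ, gn k * (4*z*(1-z)) ^ k) * (1-2*z) := by
    rw [← tsum_mul_right]
    exact tsum_congr (fun k => by ring)
  rw [h1, FG_eq hz]
  rw [GG]
  ring

lemma intFF_eq : ∫ z in Set.Ioc (0:ℝ) (1/2), FF z
    = ∫ z in Set.Ioc (0:ℝ) (1/2), (∑' k : ℕ, gn k * ((4*z*(1-z)) ^ k * (1-2*z))) := by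
  rw [integral_Ioc_eq_integral_Ioo, integral_Ioc_eq_integral_Ioo]
  apply setIntegral_congr_fun measurableSet_Ioo
  intro z hz
  exact (integrand_eq z hz).symm

theorem main_eq : (∑' n : ℕ, fn n / ((n:ℝ)+1) * (1/2) ^ n)
    = (1/2) * (∑' k : ℕ, gn k / ((k:ℝ)+1)) := by
  have hL : (∑' n : ℕ, fn n / ((n:ℝ)+1) * (1/2) ^ n)
      = 2 * ∫ z in Set.Ioc (0:ℝ) (1/2), FF z := by
    rw [← swapF]
    rw [← tsum_mul_left]
    apply tsum_congr
    intro n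
    rw [intF n, pow_succ]
    have hn : ((n:ℝ)+1) ≠ 0 := by positivity
    field_simp
  have hR : (∑' k : ℕ, gn k / ((k:ℝ)+1))
      = 4 * ∫ z in Set.Ioc (0:ℝ) (1/2),
          (∑' k : ℕ, gn k * ((4*z*(1-z)) ^ k * (1-2*z))) := by
    rw [← swapG, ← tsum_mul_left]
    apply tsum_congr
    intro k
    rw [intG k]
    have hk : ((k:ℝ)+1) ≠ 0 := by positivity
    field_simp
  rw [hL, hR, intFF_eq]
  ring

lemma termL_eq (n : ℕ) : pochR 1 n * pochR 1 n * pochR (4/3) n /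
      (pochR 2 n * pochR (5/3) n * (Nat.factorial n : ℝ)) * ((1:ℝ)/2) ^ n
    = fn n / ((n:ℝ)+1) * (1/2) ^ n := by
  rw [pochR_one, pochR_two, fn]
  have hfac : (Nat.factorial n : ℝ) ≠ 0 := Nat.cast_ne_zero.mpr (Nat.factorial_ne_zero n)
  have h5 : pochR (5/3) n ≠ 0 := ne_of_gt (pochR_pos (by norm_num) n)
  have hn1 : ((n:ℝ)+1) ≠ 0 := by positivity
  have hfs : (Nat.factorial (n+1) : ℝ) = ((n:ℝ)+1) * (Nat.factorial n : ℝ) := by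
    rw [Nat.factorial_succ]; push_cast; ring
  rw [hfs]
  field_simp

lemma termR_eq (k : ℕ) : pochR 1 k * pochR 1 k * pochR (7/6) k /
      (pochR 2 k * pochR (5/3) k * (Nat.factorial k : ℝ)) * (1:ℝ) ^ k
    = gn k / ((k:ℝ)+1) := by
  rw [pochR_one, pochR_two, gn, one_pow, mul_one]
  have hfac : (Nat.factorial k : ℝ) ≠ 0 := Nat.cast_ne_zero.mpr (Nat.factorial_ne_zero k)
  have h5 : pochR (5/3) k ≠ 0 := ne_of_gt (pochR_pos (by norm_num) k)
  have hn1 : ((k:ℝ)+1) ≠ 0 := by positivity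
  have hfs : (Nat.factorial (k+1) : ℝ) = ((k:ℝ)+1) * (Nat.factorial k : ℝ) := by
    rw [Nat.factorial_succ]; push_cast; ring
  rw [hfs]
  field_simp


end S13

open S13 in
/-- `₃F₂(1,1,4/3;2,5/3;1/2) = (1/2)·₃F₂(1,1,7/6;2,5/3;1)`, where the series on
the right converges (since `2 + 5/3 − 1 − 1 − 7/6 = 1/2 > 0`). -/
theorem stmt13 :
    Summable (fun k : ℕ => pochR 1 k * pochR 1 k * pochR (7/6) k /
      (pochR 2 k * pochR (5/3) k * (Nat.factorial k : ℝ)) * (1:ℝ) ^ k) ∧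
    F32R 1 1 (4/3) 2 (5/3) (1/2) = (1/2) * F32R 1 1 (7/6) 2 (5/3) 1 := by
  constructor
  · exact summable_b.congr (fun k => (termR_eq k).symm)
  · rw [F32R, F32R]
    rw [tsum_congr termL_eq, tsum_congr termR_eq]
    exact main_eq
end
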